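/- If P ⊆ Q ⊆ ℝ^{k-1} are polytopes with dim P = k-1, vertices of P in F^{k-1} and facet inequalities of Q with coefficients in F for a subfield F ⊆ ℝ, and if every simplex Δ with P ⊆ Δ ⊆ Q has at least one vertex outside F^{k-1}, while some such simplex exists over ℝ, then the slack matrix A of the pair (P,Q) satisfies rank₊(A, F) > k = rank₊(A, ℝ). -/

import Mathlib

open Finset Submodule

namespace Stmt5Aux

variable {d m n : ℕ}

lemma affine_eval (f : (Fin d → ℝ) →ᵃ[ℝ] ℝ) (x : Fin d → ℝ) :
    f x = f 0 + ∑ r, x r * f.linear (Pi.single r 1) := by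
  have h1 : f x = f.linear x + f 0 := by simpa using f.map_vadd 0 x
  have h2 := LinearMap.pi_apply_eq_sum_univ f.linear x
  rw [h1, h2, add_comm]
  congr 1
  refine Finset.sum_congr rfl fun r _ => ?_
  rw [smul_eq_mul]
  congr 2
  funext j
  simp [Pi.single_apply, eq_comm]

lemma affine_mem (S : Subfield ℝ) (f : (Fin d → ℝ) →ᵃ[ℝ] ℝ)
    (h0 : f 0 ∈ S) (hl : ∀ l, f.linear (Pi.single l 1) ∈ S)
    (x : Fin d → ℝ) (hx : ∀ l, x l ∈ S) : f x ∈ S := by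
  rw [affine_eval]
  exact S.add_mem h0 (Subfield.sum_mem S fun r _ => S.mul_mem (hx r) (hl r))

lemma ray_unbounded {Q : Set (Fin d → ℝ)} (hbdd : Bornology.IsBounded Q)
    {x0 u : Fin d → ℝ} (hu : u ≠ 0) (h : ∀ s : ℝ, 0 ≤ s → x0 + s • u ∈ Q) : False := by
  obtain ⟨C, hC⟩ := hbdd.exists_norm_le
  have hun : 0 < ‖u‖ := norm_pos_iff.2 hu
  set s : ℝ := (|C| + ‖x0‖ + 1) / ‖u‖ with hs
  have hs0 : 0 ≤ s := by positivity
  have hmem := hC _ (h s hs0)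
  have h1 : ‖s • u‖ ≤ ‖x0 + s • u‖ + ‖x0‖ := by
    have := norm_add_le (x0 + s • u) (-x0)
    simpa [add_assoc, add_comm, add_left_comm] using this
  have h2 : ‖s • u‖ = |C| + ‖x0‖ + 1 := by
    rw [norm_smul, Real.norm_eq_abs, abs_of_nonneg hs0, hs, div_mul_cancel₀]
    exact ne_of_gt hun
  have : |C| + ‖x0‖ + 1 ≤ C + ‖x0‖ := by
    rw [← h2]
    exact h1.trans (add_le_add hmem le_rfl)
  have := le_abs_self C
  linarith


lemma subfield_solve (S : Subfield ℝ) {N q : ℕ} (D : Fin N → Fin q → ℝ)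
    (hD : ∀ j t, D j t ∈ S) (hspan : Submodule.span ℝ (Set.range D) = ⊤)
    (t : Fin q → ℝ) (ht : ∀ r, t r ∈ S) :
    ∃ μ : Fin N → ℝ, (∀ j, μ j ∈ S) ∧ ∑ j, μ j • D j = t := by
  classical
  obtain ⟨s, hsub, hspan', hli⟩ := exists_linearIndependent ℝ (Set.range D)
  rw [hspan] at hspan'
  haveI : Fintype s := ((Set.finite_range D).subset hsub).fintype
  have hcard : Fintype.card s = q := by
    have h1 := finrank_span_set_eq_card hli
    rw [hspan', finrank_top, Module.finrank_fin_fun, Set.toFinset_card] at h1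
    omega
  obtain ⟨e⟩ : Nonempty (Fin q ≃ s) := ⟨(Fintype.equivFinOfCardEq hcard).symm⟩
  have hrρ : ∀ i : Fin q, ∃ j : Fin N, D j = (e i : Fin q → ℝ) := fun i => hsub (e i).2
  choose ρ hρ using hrρ
  set E : Matrix (Fin q) (Fin q) ℝ := fun i => D (ρ i) with hE
  have hErows : LinearIndependent ℝ (fun i => E i) := by
    have : (fun i => E i) = (Subtype.val : s → (Fin q → ℝ)) ∘ e := by
      funext i; rw [hE]; exact hρ i
    rw [this]
    exact hli.comp e e.injective
  have hEunit : IsUnit E := Matrix.linearIndependent_rows_iff_isUnit.mp hErows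
  have hEdetunit : IsUnit E.det := (Matrix.isUnit_iff_isUnit_det E).mp hEunit
  -- entries of E⁻¹ are in S
  set Ec : Matrix (Fin q) (Fin q) S := fun i j => ⟨E i j, hD _ _⟩ with hEc
  have hmap : Ec.map S.subtype = E := by ext i j; rfl
  have hdet : E.det ∈ S := by
    rw [← hmap, ← RingHom.mapMatrix_apply, ← RingHom.map_det]
    exact (Ec.det).2
  have hadj : ∀ i j, E.adjugate i j ∈ S := by
    intro i j
    rw [← hmap, ← RingHom.mapMatrix_apply, ← RingHom.map_adjugate]
    exact (Ec.adjugate i j).2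
  have hinv : ∀ i j, E⁻¹ i j ∈ S := by
    intro i j
    rw [Matrix.inv_def, Ring.inverse_eq_inv']
    exact S.mul_mem (S.inv_mem hdet) (hadj i j)
  set μ₀ : Fin q → ℝ := Matrix.vecMul t E⁻¹ with hμ₀
  have hμ₀S : ∀ i, μ₀ i ∈ S := by
    intro i
    rw [hμ₀]
    simp only [Matrix.vecMul, dotProduct]
    exact Subfield.sum_mem S fun j _ => S.mul_mem (ht j) (hinv j i)
  have hμ₀E : ∑ i, μ₀ i • E i = t := by
    have h1 : Matrix.vecMul μ₀ E = t := by
      rw [hμ₀, Matrix.vecMul_vecMul, Matrix.nonsing_inv_mul E hEdetunit, Matrix.vecMul_one]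
    funext j
    rw [← h1]
    simp [Matrix.vecMul, dotProduct, Finset.sum_apply]
  refine ⟨fun j => ∑ i, if ρ i = j then μ₀ i else 0, fun j =>
    Subfield.sum_mem S fun i _ => ?_, ?_⟩
  · by_cases h : ρ i = j <;> simp [h, S.zero_mem, hμ₀S i]
  · have : ∀ i : Fin q, ∑ j, (if ρ i = j then μ₀ i else 0) • D j = μ₀ i • E i := by
      intro i
      simp only [ite_smul, zero_smul]
      rw [Finset.sum_ite_eq univ (ρ i) (fun j => μ₀ i • D j)]
      simp [hE]
    calc ∑ j, (∑ i, if ρ i = j then μ₀ i else 0) • D j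
        = ∑ j, ∑ i, (if ρ i = j then μ₀ i else 0) • D j := by
          refine Finset.sum_congr rfl fun j _ => ?_
          rw [Finset.sum_smul]
      _ = ∑ i, ∑ j, (if ρ i = j then μ₀ i else 0) • D j := Finset.sum_comm
      _ = ∑ i, μ₀ i • E i := Finset.sum_congr rfl fun i _ => this i
      _ = t := hμ₀E


lemma exists_dual (S : Subfield ℝ) (hd : 1 ≤ d) (v : Fin m → (Fin d → ℝ))
    (f : Fin n → ((Fin d → ℝ) →ᵃ[ℝ] ℝ)) (Q : Set (Fin d → ℝ))
    (hQ : Q = {x | ∀ j, 0 ≤ f j x}) (hdim : affineSpan ℝ (Set.range v) = ⊤)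
    (hPQ : ∀ i, v i ∈ Q) (hbdd : Bornology.IsBounded Q)
    (hfF : ∀ j, (f j) 0 ∈ S ∧ ∀ l, (f j).linear (Pi.single l 1) ∈ S)
    (t0 : ℝ) (w : Fin d → ℝ) (ht0 : t0 ∈ S) (hw : ∀ r, w r ∈ S) :
    ∃ μ : Fin n → ℝ, (∀ j, μ j ∈ S) ∧ ∀ x, ∑ j, μ j * f j x = t0 + ∑ r, w r * x r := by
  classical
  haveI : Nonempty (Fin m) := by
    rcases Nat.eq_zero_or_pos m with hm | hm
    · exfalso
      subst hm
      rw [Set.range_eq_empty v, AffineSubspace.span_empty] at hdim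
      have h0 : (0 : Fin d → ℝ) ∈ (⊥ : AffineSubspace ℝ (Fin d → ℝ)) := by
        rw [hdim]; trivial
      exact h0
    · exact ⟨⟨0, hm⟩⟩
  set D : Fin n → Fin (d + 1) → ℝ :=
    fun j => Fin.cons (f j 0) (fun r => (f j).linear (Pi.single r 1)) with hD
  have hDS : ∀ j t, D j t ∈ S := by
    intro j t
    refine Fin.cases ?_ ?_ t
    · simpa [hD] using (hfF j).1
    · intro r; simpa [hD] using (hfF j).2 r
  -- the rows of D span everything
  have hspan : Submodule.span ℝ (Set.range D) = ⊤ := by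
    by_contra hne
    obtain ⟨g, hg0, hgbot⟩ := Submodule.exists_dual_map_eq_bot_of_lt_top
      (lt_top_iff_ne_top.2 hne) inferInstance
    have hgD : ∀ j, g (D j) = 0 := by
      intro j
      have : g (D j) ∈ (Submodule.span ℝ (Set.range D)).map g :=
        Submodule.mem_map_of_mem (Submodule.subset_span (Set.mem_range_self j))
      rw [hgbot] at this
      simpa using this
    set α : Fin (d+1) → ℝ := fun t => g (fun j' => if t = j' then 1 else 0) with hα
    have hgapp : ∀ z : Fin (d+1) → ℝ, g z = ∑ t, z t * α t := by
      intro z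
      have := LinearMap.pi_apply_eq_sum_univ g z
      simpa [hα, smul_eq_mul] using this
    have hαne : α ≠ 0 := by
      intro h0
      refine hg0 (LinearMap.ext fun z => ?_)
      rw [hgapp, h0]
      simp
    set a0 : ℝ := α 0 with ha0
    set u : Fin d → ℝ := fun r => α r.succ with hu
    have hkey : ∀ j, f j 0 * a0 + (f j).linear u = 0 := by
      intro j
      have h1 := hgD j
      rw [hgapp] at h1
      rw [Fin.sum_univ_succ] at h1
      have h2 : (f j).linear u = ∑ r, u r * (f j).linear (Pi.single r 1) := by
        have := LinearMap.pi_apply_eq_sum_univ (f j).linear u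
        rw [this]
        refine Finset.sum_congr rfl fun r _ => ?_
        rw [smul_eq_mul]
        congr 2
        funext j'
        simp [Pi.single_apply, eq_comm]
      rw [h2]
      simp only [hD, Fin.cons_zero, Fin.cons_succ] at h1
      rw [← h1]
      congr 1
      exact Finset.sum_congr rfl fun r _ => mul_comm _ _
    have hQ' : ∀ (y : Fin d → ℝ), y ∈ Q ↔ ∀ j, 0 ≤ f j y := by
      intro y; rw [hQ]; rfl
    rcases eq_or_ne a0 0 with h00 | h00
    · have hlin : ∀ j, (f j).linear u = 0 := by
        intro j
        have := hkey j
        rw [show a0 = 0 from h00] at this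
        simpa using this
      have hune : u ≠ 0 := by
        intro h0
        apply hαne
        funext tt
        refine Fin.cases ?_ ?_ tt
        · exact h00
        · intro r; exact congrFun h0 r
      refine ray_unbounded hbdd hune (x0 := v (Classical.arbitrary _)) (fun s hs => ?_)
      rw [hQ']
      intro j
      have hvadd : v (Classical.arbitrary _) + s • u = s • u +ᵥ v (Classical.arbitrary _) := by
        simp [add_comm]
      rw [hvadd, AffineMap.map_vadd]
      have : (f j).linear (s • u) = 0 := by rw [map_smul, hlin j]; simp
      rw [this]
      have := hPQ (Classical.arbitrary _)
      rw [hQ'] at this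
      simpa using this j
    · set w0 : Fin d → ℝ := (1 / a0) • u with hw0def
      have hw0 : ∀ j, f j w0 = 0 := by
        intro j
        have h1 : f j w0 = (f j).linear w0 + f j 0 := by simpa using (f j).map_vadd 0 w0
        have h2 : (f j).linear w0 = (1 / a0) * (f j).linear u := by
          rw [hw0def, map_smul]; simp
        have h3 : (f j).linear u = -(f j 0 * a0) := by linarith [hkey j]
        rw [h1, h2, h3]
        field_simp
        ring
      have hvex : ∃ i, v i ≠ w0 := by
        by_contra hcon
        push_neg at hcon
        have hsub : Set.range v ⊆ {w0} := by
          rintro _ ⟨i, rfl⟩; exact hcon i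
        have htop : (⊤ : AffineSubspace ℝ (Fin d → ℝ)) = affineSpan ℝ {w0} := by
          refine le_antisymm ?_ le_top
          rw [← hdim]
          exact affineSpan_mono ℝ hsub
        have hdir := congrArg AffineSubspace.direction htop
        rw [AffineSubspace.direction_top, direction_affineSpan, vectorSpan_singleton] at hdir
        have hmem : Pi.single (⟨0, hd⟩ : Fin d) (1:ℝ) ∈ (⊤ : Submodule ℝ (Fin d → ℝ)) :=
          Submodule.mem_top
        rw [hdir, Submodule.mem_bot] at hmem
        have := congrFun hmem ⟨0, hd⟩
        rw [Pi.single_eq_same] at this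
        exact one_ne_zero this
      obtain ⟨i, hvi⟩ := hvex
      have hune : v i - w0 ≠ 0 := sub_ne_zero_of_ne hvi
      refine ray_unbounded hbdd hune (x0 := v i) (fun s hs => ?_)
      rw [hQ']
      intro j
      have hvadd : v i + s • (v i - w0) = s • (v i - w0) +ᵥ v i := by simp [add_comm]
      rw [hvadd, AffineMap.map_vadd]
      have hvmem := hPQ i
      rw [hQ'] at hvmem
      have h1 : (f j).linear (s • (v i - w0)) = s * (f j (v i) - f j w0) := by
        rw [map_smul]
        have : (f j).linear (v i - w0) = f j (v i) - f j w0 := by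
          simpa using (f j).linearMap_vsub (v i) w0
        rw [this]; rfl
      rw [h1, hw0 j]
      have := hvmem j
      simp only [vadd_eq_add, sub_zero]
      nlinarith
  obtain ⟨μ, hμS, hμD⟩ := subfield_solve S D hDS hspan (Fin.cons t0 w)
    (fun r => Fin.cases ht0 hw r)
  refine ⟨μ, hμS, fun x => ?_⟩
  have h0 : ∑ j, μ j * f j 0 = t0 := by
    have := congrFun hμD 0
    simpa [Finset.sum_apply, hD, Fin.cons_zero] using this
  have hr : ∀ r : Fin d, ∑ j, μ j * (f j).linear (Pi.single r 1) = w r := by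
    intro r
    have := congrFun hμD r.succ
    simpa [Finset.sum_apply, hD, Fin.cons_succ] using this
  have expand : ∀ j, μ j * f j x
      = μ j * f j 0 + ∑ r, x r * (μ j * (f j).linear (Pi.single r 1)) := by
    intro j
    rw [affine_eval (f j) x, mul_add, Finset.mul_sum]
    congr 1
    exact Finset.sum_congr rfl fun r _ => by ring
  rw [Finset.sum_congr rfl (fun j _ => expand j), Finset.sum_add_distrib, h0, Finset.sum_comm]
  congr 1
  refine Finset.sum_congr rfl fun r _ => ?_
  rw [← Finset.mul_sum, hr r, mul_comm]


lemma nonempty_m (hdim : affineSpan ℝ (Set.range (v : Fin m → (Fin d → ℝ)))= ⊤) :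
    Nonempty (Fin m) := by
  rcases Nat.eq_zero_or_pos m with hm | hm
  · exfalso
    subst hm
    rw [Set.range_eq_empty v, AffineSubspace.span_empty] at hdim
    have h0 : (0 : Fin d → ℝ) ∈ (⊥ : AffineSubspace ℝ (Fin d → ℝ)) := by
      rw [hdim]; trivial
    exact h0
  · exact ⟨⟨0, hm⟩⟩

set_option maxHeartbeats 2000000 in
lemma core (S : Subfield ℝ) (hd : 1 ≤ d) (v : Fin m → (Fin d → ℝ))
    (f : Fin n → ((Fin d → ℝ) →ᵃ[ℝ] ℝ)) (Q : Set (Fin d → ℝ))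
    (hQ : Q = {x | ∀ j, 0 ≤ f j x}) (hdim : affineSpan ℝ (Set.range v) = ⊤)
    (hPQ : ∀ i, v i ∈ Q) (hbdd : Bornology.IsBounded Q)
    (hfF : ∀ j, (f j) 0 ∈ S ∧ ∀ l, (f j).linear (Pi.single l 1) ∈ S)
    (k : ℕ) (hk : k ≤ d + 1) (b : Fin k → Fin n → ℝ) (c : Fin k → Fin m → ℝ)
    (hb : ∀ l j, 0 ≤ b l j ∧ b l j ∈ S) (hc : ∀ l i, 0 ≤ c l i ∧ c l i ∈ S)
    (hfact : ∀ j i, f j (v i) = ∑ l, b l j * c l i) :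
    k = d + 1 ∧ ∃ p : Fin (d+1) → (Fin d → ℝ), AffineIndependent ℝ p ∧
      convexHull ℝ (Set.range v) ⊆ convexHull ℝ (Set.range p) ∧
      convexHull ℝ (Set.range p) ⊆ Q ∧ ∀ l r, p l r ∈ S := by
  classical
  haveI : Nonempty (Fin m) := nonempty_m hdim
  have hQ' : ∀ (y : Fin d → ℝ), y ∈ Q ↔ ∀ j, 0 ≤ f j y := fun y => by rw [hQ]; rfl
  obtain ⟨μ, hμS, hμ⟩ := exists_dual S hd v f Q hQ hdim hPQ hbdd hfF 1 0
    S.one_mem (fun _ => S.zero_mem)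
  have hμ1 : ∀ x, ∑ j, μ j * f j x = 1 := by intro x; rw [hμ x]; simp
  have hν0 : ∀ r : Fin d, ∃ ν : Fin n → ℝ, (∀ j, ν j ∈ S) ∧ ∀ x, ∑ j, ν j * f j x = x r := by
    intro r
    obtain ⟨ν, hνS, hν⟩ := exists_dual S hd v f Q hQ hdim hPQ hbdd hfF 0 (Pi.single r 1)
      S.zero_mem (fun r' => by
        rw [Pi.single_apply]
        split <;> [exact S.one_mem; exact S.zero_mem])
    refine ⟨ν, hνS, fun x => ?_⟩
    rw [hν x]
    simp [Pi.single_apply, ite_mul]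
  choose ν hνS hν using hν0
  set col : Fin m → (Fin n → ℝ) := fun i j => f j (v i) with hcol
  set CS : Submodule ℝ (Fin n → ℝ) := Submodule.span ℝ (Set.range col) with hCS
  set M : Matrix (Fin (d+1)) (Fin n) ℝ := fun t j => (Fin.cons (μ j) (fun r => ν r j) : Fin (d+1) → ℝ) t with hM
  set Ψ : (Fin n → ℝ) →ₗ[ℝ] (Fin (d+1) → ℝ) := Matrix.mulVecLin M with hΨ
  set emb : (Fin d → ℝ) → (Fin (d+1) → ℝ) := fun x => Fin.cons 1 x with hemb
  have hΨcol : ∀ i, Ψ (col i) = emb (v i) := by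
    intro i; funext t
    rw [hΨ, Matrix.mulVecLin_apply]
    refine Fin.cases ?_ ?_ t
    · show ∑ j, M 0 j * col i j = emb (v i) 0
      simp only [hM, Fin.cons_zero, hcol, hemb]
      rw [hμ1 (v i)]
    · intro r
      show ∑ j, M r.succ j * col i j = emb (v i) r.succ
      simp only [hM, Fin.cons_succ, hcol, hemb]
      rw [hν r (v i)]
  have hstep1 : ∀ x : Fin d → ℝ, emb x ∈ Submodule.span ℝ (Set.range fun i => emb (v i)) := by
    intro x
    have hx : x ∈ affineSpan ℝ (Set.range v) := by rw [hdim]; trivial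
    obtain ⟨wt, hwt, hxeq⟩ := eq_affineCombination_of_mem_affineSpan_of_fintype hx
    rw [Finset.univ.affineCombination_eq_linear_combination v wt hwt] at hxeq
    have hkey : emb x = ∑ i, wt i • emb (v i) := by
      funext t
      refine Fin.cases ?_ ?_ t
      · rw [show (∑ i, wt i • emb (v i)) 0 = ∑ i, wt i * 1 by
          simp [Finset.sum_apply, hemb]]
        simp only [mul_one, hwt]
        simp [hemb]
      · intro r
        rw [show (∑ i, wt i • emb (v i)) r.succ = ∑ i, wt i * v i r by
          simp [Finset.sum_apply, hemb]]
        rw [show emb x r.succ = x r by simp [hemb]]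
        rw [hxeq]
        simp [Finset.sum_apply]
    rw [hkey]
    exact Submodule.sum_mem _ fun i _ => Submodule.smul_mem _ _ (Submodule.subset_span ⟨i, rfl⟩)
  have hTtop : Submodule.span ℝ (Set.range fun i => emb (v i)) = ⊤ := by
    rw [eq_top_iff]
    intro z _
    have hz : z = z 0 • emb (0 : Fin d → ℝ)
        + ∑ r : Fin d, z r.succ • (emb (Pi.single r 1) - emb 0) := by
      funext t
      refine Fin.cases ?_ ?_ t
      · simp [Finset.sum_apply, hemb]
      · intro r'
        simp [Finset.sum_apply, hemb, Pi.single_apply, mul_ite]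
    rw [hz]
    exact Submodule.add_mem _ (Submodule.smul_mem _ _ (hstep1 0))
      (Submodule.sum_mem _ fun r _ => Submodule.smul_mem _ _
        (Submodule.sub_mem _ (hstep1 _) (hstep1 0)))
  have hCSge : d + 1 ≤ Module.finrank ℝ CS := by
    have hmap : CS.map Ψ = ⊤ := by
      rw [hCS, Submodule.map_span, ← Set.range_comp]
      rw [show (Ψ ∘ col) = fun i => emb (v i) from funext hΨcol]
      exact hTtop
    have h1 := Submodule.finrank_map_le Ψ CS
    rw [hmap, finrank_top, Module.finrank_fin_fun] at h1
    exact h1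
  have hcolspan : ∀ i, col i = ∑ l, c l i • b l := by
    intro i
    funext j
    rw [show col i j = f j (v i) by rw [hcol], hfact j i]
    simp only [Finset.sum_apply, Pi.smul_apply, smul_eq_mul]
    exact Finset.sum_congr rfl fun l _ => by ring
  have hCSle : CS ≤ Submodule.span ℝ (Set.range b) := by
    rw [hCS]
    refine Submodule.span_le.2 ?_
    rintro _ ⟨i, rfl⟩
    rw [hcolspan i]
    exact Submodule.sum_mem _ fun l _ => Submodule.smul_mem _ _ (Submodule.subset_span ⟨l, rfl⟩)
  have hrange_le : Module.finrank ℝ (Submodule.span ℝ (Set.range b)) ≤ k := by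
    have h2 := finrank_range_le_card (R := ℝ) b
    unfold Set.finrank at h2
    simpa using h2
  have hkd : k = d + 1 := by
    have h1 : Module.finrank ℝ CS ≤ k := le_trans (Submodule.finrank_mono hCSle) hrange_le
    omega
  subst hkd
  have hCSeq : CS = Submodule.span ℝ (Set.range b) :=
    Submodule.eq_of_le_of_finrank_le hCSle (le_trans hrange_le hCSge)
  have hrep : ∀ l, ∃ a : Fin m → ℝ, ∑ i, a i • col i = b l := by
    intro l
    have h1 : b l ∈ CS := hCSeq ▸ Submodule.subset_span ⟨l, rfl⟩
    rw [hCS] at h1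
    exact (mem_span_range_iff_exists_fun ℝ).1 h1
  choose α hα using hrep
  have hbα : ∀ l j, b l j = ∑ i, α l i * f j (v i) := by
    intro l j
    rw [← hα l]
    simp [Finset.sum_apply, hcol]
  set t : Fin (d+1) → ℝ := fun l => ∑ j, μ j * b l j with ht
  have key : ∀ (lam : Fin n → ℝ) (l), (∑ j, lam j * b l j)
      = ∑ i, α l i * (∑ j, lam j * f j (v i)) := by
    intro lam l
    calc (∑ j, lam j * b l j) = ∑ j, ∑ i, lam j * (α l i * f j (v i)) := by
          refine Finset.sum_congr rfl fun j _ => ?_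
          rw [hbα l j, Finset.mul_sum]
      _ = ∑ i, ∑ j, lam j * (α l i * f j (v i)) := Finset.sum_comm
      _ = ∑ i, α l i * (∑ j, lam j * f j (v i)) := by
          refine Finset.sum_congr rfl fun i _ => ?_
          rw [Finset.mul_sum]
          exact Finset.sum_congr rfl fun j _ => by ring
  have htα : ∀ l, t l = ∑ i, α l i := by
    intro l
    rw [ht]
    show (∑ j, μ j * b l j) = _
    rw [key μ l]
    refine Finset.sum_congr rfl fun i _ => ?_
    rw [hμ1 (v i), mul_one]
  have hνb : ∀ l r, (∑ j, ν r j * b l j) = ∑ i, α l i * v i r := by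
    intro l r
    rw [key (ν r) l]
    refine Finset.sum_congr rfl fun i _ => ?_
    rw [hν r (v i)]
  set pt : Fin (d+1) → (Fin d → ℝ) := fun l r => (∑ j, ν r j * b l j) / t l with hpt
  have heval : ∀ l, t l ≠ 0 → ∀ j, f j (pt l) = b l j / t l := by
    intro l hl j
    set ω : Fin m → ℝ := fun i => α l i / t l with hω
    have hωsum : ∑ i, ω i = 1 := by
      rw [hω, ← Finset.sum_div, ← htα l, div_self hl]
    have hptω : pt l = ∑ i, ω i • v i := by
      funext r
      rw [show pt l r = (∑ j, ν r j * b l j) / t l by rw [hpt], hνb l r]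
      simp only [Finset.sum_apply, hω, Pi.smul_apply, smul_eq_mul]
      rw [Finset.sum_div]
      exact Finset.sum_congr rfl fun i _ => by ring
    have hcomb : pt l = Finset.univ.affineCombination ℝ v ω := by
      rw [Finset.univ.affineCombination_eq_linear_combination v ω hωsum, hptω]
    rw [hcomb, Finset.map_affineCombination Finset.univ v ω hωsum (f j)]
    rw [Finset.univ.affineCombination_eq_linear_combination (⇑(f j) ∘ v) ω hωsum]
    simp only [Function.comp_apply, smul_eq_mul]
    rw [show (∑ i, ω i * f j (v i)) = ∑ i, (α l i * f j (v i)) / t l from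
      Finset.sum_congr rfl fun i _ => by rw [hω]; ring]
    rw [← Finset.sum_div, ← hbα l j]
  have htpos : ∀ l, 0 < t l := by
    intro l
    rcases lt_trichotomy (t l) 0 with hneg | hzero | hpos
    · exfalso
      have hfw : ∀ j, f j (pt l) ≤ 0 := by
        intro j
        rw [heval l (ne_of_lt hneg) j]
        exact div_nonpos_of_nonneg_of_nonpos (hb l j).1 (le_of_lt hneg)
      by_cases hall : ∀ i, v i = pt l
      · obtain ⟨i0⟩ := (inferInstance : Nonempty (Fin m))
        have hz : ∀ j, f j (v i0) = 0 := fun j =>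
          le_antisymm (by rw [hall i0]; exact hfw j) ((hQ' _).1 (hPQ i0) j)
        have h1 := hμ1 (v i0)
        rw [Finset.sum_congr rfl (fun j _ => by rw [hz j, mul_zero])] at h1
        simp at h1
      · push_neg at hall
        obtain ⟨i, hi⟩ := hall
        have hune : v i - pt l ≠ 0 := sub_ne_zero_of_ne hi
        refine ray_unbounded hbdd hune (x0 := v i) (fun s hs => ?_)
        rw [hQ']
        intro j
        have hvadd : v i + s • (v i - pt l) = s • (v i - pt l) +ᵥ v i := by
          simp [add_comm]
        rw [hvadd, AffineMap.map_vadd]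
        have h1 : (f j).linear (s • (v i - pt l)) = s * (f j (v i) - f j (pt l)) := by
          rw [map_smul]
          rw [show (f j).linear (v i - pt l) = f j (v i) - f j (pt l) by
            simpa using (f j).linearMap_vsub (v i) (pt l)]
          rfl
        rw [h1]
        have h2 := (hQ' _).1 (hPQ i) j
        have h3 := hfw j
        simp only [vadd_eq_add]
        nlinarith
    · exfalso
      set u : Fin d → ℝ := ∑ i, α l i • v i with hu
      have hαsum : ∑ i, α l i = 0 := by rw [← htα l, hzero]
      have hblin : ∀ j, b l j = (f j).linear u := by
        intro j
        have hdec : ∀ i : Fin m, f j (v i) = (f j).linear (v i) + f j 0 := fun i => by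
          simpa using (f j).map_vadd 0 (v i)
        rw [hbα l j]
        rw [Finset.sum_congr rfl (fun i _ => by rw [hdec i, mul_add])]
        rw [Finset.sum_add_distrib, ← Finset.sum_mul, hαsum, zero_mul, add_zero]
        rw [hu, map_sum]
        refine Finset.sum_congr rfl fun i _ => ?_
        rw [map_smul, smul_eq_mul]
      by_cases hu0 : u = 0
      · have hbl0 : b l = 0 := funext fun j => by
          rw [hblin j, hu0, map_zero]; rfl
        have hle : CS ≤ Submodule.span ℝ (↑((Finset.univ.erase l).image b) : Set (Fin n → ℝ)) := by
          rw [hCS]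
          refine Submodule.span_le.2 ?_
          rintro _ ⟨i, rfl⟩
          have hcoli : col i = ∑ l' ∈ Finset.univ.erase l, c l' i • b l' := by
            rw [hcolspan i, ← Finset.add_sum_erase _ _ (Finset.mem_univ l), hbl0]
            simp
          rw [hcoli]
          exact Submodule.sum_mem _ fun l' hl' => Submodule.smul_mem _ _
            (Submodule.subset_span (Finset.mem_coe.2 (Finset.mem_image_of_mem b hl')))
        have h1 := le_trans (Submodule.finrank_mono hle) (by
          have h2 := finrank_span_finset_le_card (R := ℝ) ((Finset.univ.erase l).image b)
          unfold Set.finrank at h2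
          exact h2)
        have h3 : ((Finset.univ.erase l).image b).card ≤ d :=
          le_trans Finset.card_image_le
            (by rw [Finset.card_erase_of_mem (Finset.mem_univ l)]; simp)
        omega
      · obtain ⟨i0⟩ := (inferInstance : Nonempty (Fin m))
        refine ray_unbounded hbdd hu0 (x0 := v i0) (fun s hs => ?_)
        rw [hQ']
        intro j
        have hvadd : v i0 + s • u = s • u +ᵥ v i0 := by simp [add_comm]
        rw [hvadd, AffineMap.map_vadd]
        have h1 : (f j).linear (s • u) = s * b l j := by
          rw [map_smul, ← hblin j]; rfl
        rw [h1]
        have h2 := (hQ' _).1 (hPQ i0) j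
        have h3 := (hb l j).1
        simp only [vadd_eq_add]
        nlinarith
    · exact hpos
  have hptQ : ∀ l, pt l ∈ Q := by
    intro l
    rw [hQ']
    intro j
    rw [heval l (ne_of_gt (htpos l)) j]
    exact div_nonneg (hb l j).1 (le_of_lt (htpos l))
  have hQconv : Convex ℝ Q := by
    rw [hQ]
    intro x hx y hy a b' ha hb' hab
    intro j
    rw [Convex.combo_affine_apply hab]
    exact add_nonneg (mul_nonneg ha (hx j)) (mul_nonneg hb' (hy j))
  have hvmem : ∀ i, v i ∈ convexHull ℝ (Set.range pt) := by
    intro i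
    set W : Fin (d+1) → ℝ := fun l => t l * c l i with hW
    have hW0 : ∀ l ∈ Finset.univ, 0 ≤ W l := fun l _ =>
      mul_nonneg (le_of_lt (htpos l)) (hc l i).1
    have hWsum : ∑ l, W l = 1 := by
      calc ∑ l, W l = ∑ l, ∑ j, (μ j * b l j) * c l i := by
            refine Finset.sum_congr rfl fun l _ => ?_
            rw [show W l = t l * c l i from rfl,
              show t l = ∑ j, μ j * b l j from rfl, Finset.sum_mul]
        _ = ∑ j, ∑ l, (μ j * b l j) * c l i := Finset.sum_comm
        _ = ∑ j, μ j * f j (v i) := by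
            refine Finset.sum_congr rfl fun j _ => ?_
            rw [hfact j i, Finset.mul_sum]
            exact Finset.sum_congr rfl fun l _ => by ring
        _ = 1 := hμ1 (v i)
    have hcomb : Finset.univ.centerMass W pt = v i := by
      rw [Finset.centerMass, hWsum]
      simp only [inv_one, one_smul]
      funext r
      simp only [Finset.sum_apply, Pi.smul_apply, smul_eq_mul]
      calc ∑ l, W l * pt l r = ∑ l, c l i * (∑ j, ν r j * b l j) := by
            refine Finset.sum_congr rfl fun l _ => ?_
            have h5 : t l ≠ 0 := ne_of_gt (htpos l)
            rw [show pt l r = (∑ j, ν r j * b l j) / t l from rfl,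
              show W l = t l * c l i from rfl]
            field_simp
        _ = ∑ l, ∑ j, c l i * (ν r j * b l j) := by
            refine Finset.sum_congr rfl fun l _ => ?_
            rw [Finset.mul_sum]
        _ = ∑ j, ∑ l, c l i * (ν r j * b l j) := Finset.sum_comm
        _ = ∑ j, ν r j * f j (v i) := by
            refine Finset.sum_congr rfl fun j _ => ?_
            rw [hfact j i, Finset.mul_sum]
            exact Finset.sum_congr rfl fun l _ => by ring
        _ = v i r := hν r (v i)
    rw [← hcomb]
    exact Finset.centerMass_mem_convexHull _ hW0 (by rw [hWsum]; norm_num)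
      (fun l _ => Set.mem_range_self l)
  have hspanpt : affineSpan ℝ (Set.range pt) = ⊤ := by
    rw [eq_top_iff, ← hdim]
    refine affineSpan_le.2 ?_
    rintro _ ⟨i, rfl⟩
    exact convexHull_subset_affineSpan _ (hvmem i)
  have hAI : AffineIndependent ℝ pt := by
    rw [affineIndependent_iff_finrank_vectorSpan_eq ℝ pt
      (by simp : Fintype.card (Fin (d+1)) = d + 1)]
    rw [← direction_affineSpan, hspanpt, AffineSubspace.direction_top]
    rw [finrank_top, Module.finrank_fin_fun]
  refine ⟨rfl, pt, hAI, ?_, ?_, ?_⟩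
  · exact convexHull_min (fun x hx => by obtain ⟨i, rfl⟩ := hx; exact hvmem i)
      (convex_convexHull ℝ _)
  · exact convexHull_min (fun x hx => by obtain ⟨i, rfl⟩ := hx; exact hptQ i) hQconv
  · intro l r
    rw [show pt l r = (∑ j, ν r j * b l j) / t l from rfl]
    exact S.div_mem (Subfield.sum_mem S fun j _ => S.mul_mem (hνS r j) (hb l j).2)
      (Subfield.sum_mem S fun j _ => S.mul_mem (hμS j) (hb l j).2)


end Stmt5Aux

open Stmt5Aux

/-- The nonnegative rank of a real matrix `A` over a subfield `F` of `ℝ`: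
the smallest `k` such that `A` is a sum of `k` rank-one matrices, each with
nonnegative entries belonging to `F`. -/
noncomputable def nonnegRank {m n : ℕ} (F : Subfield ℝ) (A : Matrix (Fin m) (Fin n) ℝ) : ℕ :=
  sInf {k | ∃ b : Fin k → Fin m → ℝ, ∃ c : Fin k → Fin n → ℝ,
    (∀ l i, 0 ≤ b l i ∧ b l i ∈ F) ∧ (∀ l j, 0 ≤ c l j ∧ c l j ∈ F) ∧
    A = ∑ l, Matrix.vecMulVec (b l) (c l)}

/-- If `P = conv{v_1,...,v_m}` in `R^d` is full-dimensional with vertices over `F`,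
contained in the bounded polyhedron `Q = {x | forall j, f_j x >= 0}` whose affine inequalities
have coefficients in `F`, if some simplex (with `k = d+1` affinely independent vertices) is
sandwiched between `P` and `Q`, while every such simplex has a vertex with a coordinate outside
`F`, then the slack matrix `A` satisfies `rank_+(A, F) > k = rank_+(A, R)`. -/
theorem stmt5 {d m n : ℕ} (F : Subfield ℝ) (v : Fin m → (Fin d → ℝ))
    (f : Fin n → ((Fin d → ℝ) →ᵃ[ℝ] ℝ))
    (Q : Set (Fin d → ℝ)) (hQ : Q = {x | ∀ j, 0 ≤ f j x})
    (hdim : affineSpan ℝ (Set.range v) = ⊤)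
    (hPQ : ∀ i, v i ∈ Q) (hbdd : Bornology.IsBounded Q)
    (hvF : ∀ i l, v i l ∈ F)
    (hfF : ∀ j, (f j) 0 ∈ F ∧ ∀ l, (f j).linear (Pi.single l 1) ∈ F)
    (hexists : ∃ dpts : Fin (d + 1) → (Fin d → ℝ), AffineIndependent ℝ dpts ∧
      convexHull ℝ (Set.range v) ⊆ convexHull ℝ (Set.range dpts) ∧
      convexHull ℝ (Set.range dpts) ⊆ Q)
    (hnotF : ∀ dpts : Fin (d + 1) → (Fin d → ℝ), AffineIndependent ℝ dpts →
      convexHull ℝ (Set.range v) ⊆ convexHull ℝ (Set.range dpts) →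
      convexHull ℝ (Set.range dpts) ⊆ Q → ∃ l i, dpts l i ∉ F)
    (A : Matrix (Fin n) (Fin m) ℝ) (hA : ∀ j i, A j i = f j (v i)) :
    nonnegRank F A > d + 1 ∧ nonnegRank ⊤ A = d + 1 := by

  classical
  rcases Nat.eq_zero_or_pos d with hd0 | hd
  · exfalso
    subst hd0
    obtain ⟨dp, hAI, h1, h2⟩ := hexists
    obtain ⟨l, i, _⟩ := hnotF dp hAI h1 h2
    exact i.elim0
  have hQ' : ∀ y, y ∈ Q ↔ ∀ j, 0 ≤ f j y := fun y => by rw [hQ]; rfl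
  have hfT : ∀ j, (f j) 0 ∈ (⊤ : Subfield ℝ) ∧
      ∀ l, (f j).linear (Pi.single l 1) ∈ (⊤ : Subfield ℝ) :=
    fun j => ⟨Subfield.mem_top _, fun l => Subfield.mem_top _⟩
  -- entrywise factorization from matrix factorization
  have hfact' : ∀ (k : ℕ) (b : Fin k → Fin n → ℝ) (c : Fin k → Fin m → ℝ),
      A = ∑ l, Matrix.vecMulVec (b l) (c l) → ∀ j i, f j (v i) = ∑ l, b l j * c l i := by
    intro k b c hf j i
    rw [← hA j i]
    conv_lhs => rw [hf]
    rw [Matrix.sum_apply]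
    exact Finset.sum_congr rfl fun l _ => Matrix.vecMulVec_apply _ _ _ _
  -- trivial factorization of size n
  have htriv : ∀ (S : Subfield ℝ), (∀ i l, v i l ∈ S) →
      (∀ j, (f j) 0 ∈ S ∧ ∀ l, (f j).linear (Pi.single l 1) ∈ S) →
      ∃ b : Fin n → Fin n → ℝ, ∃ c : Fin n → Fin m → ℝ,
        (∀ l i, 0 ≤ b l i ∧ b l i ∈ S) ∧ (∀ l j, 0 ≤ c l j ∧ c l j ∈ S) ∧
        A = ∑ l, Matrix.vecMulVec (b l) (c l) := by
    intro S hvS hfS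
    refine ⟨fun l j => if j = l then 1 else 0, fun l i => A l i, ?_, ?_, ?_⟩
    · intro l j
      dsimp only
      constructor
      · split <;> norm_num
      · split
        · exact S.one_mem
        · exact S.zero_mem
    · intro l i
      dsimp only
      constructor
      · rw [hA]; exact (hQ' _).1 (hPQ i) l
      · rw [hA]; exact affine_mem S (f l) (hfS l).1 (hfS l).2 (v i) (hvS i)
    · ext j i
      rw [Matrix.sum_apply]
      simp [Matrix.vecMulVec_apply, ite_mul]
  -- upper bound factorization of size d+1 over ⊤
  obtain ⟨dpts, hAI, hsub1, hsub2⟩ := hexists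
  have hspand : affineSpan ℝ (Set.range dpts) = ⊤ := by
    rw [eq_top_iff, ← hdim]
    refine affineSpan_le.2 ?_
    rintro _ ⟨i, rfl⟩
    exact (convexHull_subset_affineSpan _)
      (hsub1 (subset_convexHull ℝ _ (Set.mem_range_self i)))
  set basis : AffineBasis (Fin (d+1)) ℝ (Fin d → ℝ) := ⟨dpts, hAI, hspand⟩ with hbasis
  have hbpt : ∀ l, (basis : Fin (d+1) → (Fin d → ℝ)) l = dpts l := fun l => rfl
  have hcoord0 : ∀ l i, 0 ≤ basis.coord l (v i) := by
    intro l i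
    have hsubset : Set.range dpts ⊆ {x | 0 ≤ basis.coord l x} := by
      rintro _ ⟨l', rfl⟩
      rw [Set.mem_setOf_eq, ← hbpt l', AffineBasis.coord_apply]
      split <;> norm_num
    have hconvex : Convex ℝ {x | 0 ≤ basis.coord l x} := by
      exact (convex_Ici (0:ℝ)).affine_preimage (basis.coord l)
    exact convexHull_min hsubset hconvex
      (hsub1 (subset_convexHull ℝ _ (Set.mem_range_self i)))
  have hmem_top : ∃ b : Fin (d+1) → Fin n → ℝ, ∃ c : Fin (d+1) → Fin m → ℝ,
      (∀ l i, 0 ≤ b l i ∧ b l i ∈ (⊤ : Subfield ℝ)) ∧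
      (∀ l j, 0 ≤ c l j ∧ c l j ∈ (⊤ : Subfield ℝ)) ∧
      A = ∑ l, Matrix.vecMulVec (b l) (c l) := by
    refine ⟨fun l j => f j (dpts l), fun l i => basis.coord l (v i), ?_, ?_, ?_⟩
    · intro l j
      refine ⟨?_, Subfield.mem_top _⟩
      exact (hQ' _).1 (hsub2 (subset_convexHull ℝ _ (Set.mem_range_self l))) j
    · exact fun l i => ⟨hcoord0 l i, Subfield.mem_top _⟩
    · ext j i
      rw [Matrix.sum_apply]
      simp only [Matrix.vecMulVec_apply]
      rw [hA j i]
      have h1 : v i = Finset.univ.affineCombination ℝ (basis : Fin (d+1) → (Fin d → ℝ))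
          (fun l => basis.coord l (v i)) := (basis.affineCombination_coord_eq_self (v i)).symm
      conv_lhs => rw [h1]
      rw [Finset.map_affineCombination Finset.univ (⇑basis) _
        (basis.sum_coord_apply_eq_one (v i)) (f j)]
      rw [Finset.univ.affineCombination_eq_linear_combination (⇑(f j) ∘ ⇑basis) _
        (basis.sum_coord_apply_eq_one (v i))]
      simp only [Function.comp_apply, smul_eq_mul]
      exact Finset.sum_congr rfl fun l _ => by rw [hbpt l]; ring
  constructor
  · unfold nonnegRank
    by_contra hcon
    push_neg at hcon
    have hne : {k | ∃ b : Fin k → Fin n → ℝ, ∃ c : Fin k → Fin m → ℝ,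
        (∀ l i, 0 ≤ b l i ∧ b l i ∈ F) ∧ (∀ l j, 0 ≤ c l j ∧ c l j ∈ F) ∧
        A = ∑ l, Matrix.vecMulVec (b l) (c l)}.Nonempty := ⟨n, htriv F hvF hfF⟩
    have hmem := Nat.sInf_mem hne
    obtain ⟨b, c, hbp, hcp, hf⟩ := hmem
    obtain ⟨hk0, p, hAI', hs1, hs2, hmemS⟩ := core F hd v f Q hQ hdim hPQ hbdd hfF
      _ hcon b c hbp hcp (hfact' _ b c hf)
    obtain ⟨l, r, hbad⟩ := hnotF p hAI' hs1 hs2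
    exact hbad (hmemS l r)
  · unfold nonnegRank
    apply le_antisymm
    · exact Nat.sInf_le hmem_top
    · refine le_csInf ⟨d+1, hmem_top⟩ fun k hk => ?_
      obtain ⟨b, c, hbp, hcp, hf⟩ := hk
      by_cases hkle : k ≤ d + 1
      · obtain ⟨hkeq, -⟩ := core ⊤ hd v f Q hQ hdim hPQ hbdd hfT
          k hkle b c hbp hcp (hfact' _ b c hf)
        omega
      · omega
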